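/- Let K be a colored regularity graph such that there is no colored homomorphism from the paw graph (the complement of P₃ + K₁, i.e., a triangle with a pendant edge) into K. Then f_K(2/3) ≥ 1/3. -/

import Mathlib

/-- The three possible colors of an edge of a colored regularity graph. -/
inductive EColor : Type
  | white
  | gray
  | black
deriving DecidableEq

/-- A colored regularity graph (CRG): a finite nonempty vertex set (here `Fin n`),
each vertex colored white (`vcol i = false`) or black (`vcol i = true`), and each
unordered pair of distinct vertices colored white, gray or black. -/
structure CRG : Type where
  n : ℕ
  npos : 0 < n
  vcol : Fin n → Bool
  ecol : Fin n → Fin n → EColor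
  ecol_symm : ∀ i j, ecol i j = ecol j i

namespace CRG

/-- The function `f_K(p) = (1/k²)[p(|VW| + 2|EW|) + (1-p)(|VB| + 2|EB|)]`; the
counts over ordered pairs of distinct vertices give `2|EW|` and `2|EB|`. -/
noncomputable def fK (K : CRG) (p : ℝ) : ℝ :=
  (1 / (K.n : ℝ) ^ 2) *
    (p * (((Finset.univ.filter (fun i : Fin K.n => K.vcol i = false)).card : ℝ)
        + ((Finset.univ.filter (fun ij : Fin K.n × Fin K.n =>
            ij.1 ≠ ij.2 ∧ K.ecol ij.1 ij.2 = EColor.white)).card : ℝ))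
   + (1 - p) * (((Finset.univ.filter (fun i : Fin K.n => K.vcol i = true)).card : ℝ)
        + ((Finset.univ.filter (fun ij : Fin K.n × Fin K.n =>
            ij.1 ≠ ij.2 ∧ K.ecol ij.1 ij.2 = EColor.black)).card : ℝ)))

/-- The matrix `M_K(p)`. -/
noncomputable def M (K : CRG) (p : ℝ) : Matrix (Fin K.n) (Fin K.n) ℝ :=
  Matrix.of fun i j =>
    if i = j then (if K.vcol i then 1 - p else p)
    else
      match K.ecol i j with
      | EColor.white => p
      | EColor.gray => 0
      | EColor.black => 1 - p

/-- The function `g_K(p)`: the minimum (here: infimum, which is attained) of the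
quadratic form `uᵀ M_K(p) u` over the standard simplex. -/
noncomputable def gK (K : CRG) (p : ℝ) : ℝ :=
  sInf { x : ℝ | ∃ u : Fin K.n → ℝ, (∀ i, 0 ≤ u i) ∧ (∑ i, u i) = 1 ∧
    x = ∑ i, ∑ j, u i * K.M p i j * u j }

end CRG

/-- A colored homomorphism from a simple graph `F` to a CRG `K`. -/
def CHom {V : Type} (F : SimpleGraph V) (K : CRG) : Prop :=
  ∃ φ : V → Fin K.n,
    (∀ u v : V, F.Adj u v →
      (φ u = φ v ∧ K.vcol (φ u) = true) ∨
      (φ u ≠ φ v ∧ K.ecol (φ u) (φ v) ≠ EColor.white)) ∧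
    (∀ u v : V, u ≠ v → ¬ F.Adj u v →
      (φ u = φ v ∧ K.vcol (φ u) = false) ∨
      (φ u ≠ φ v ∧ K.ecol (φ u) (φ v) ≠ EColor.black))

/-- The paw graph (complement of `P₃ + K₁`): a triangle on `{0,2,3}` together with
the pendant edge `{1,3}`, on vertex set `Fin 4`. -/
def pawGraph : SimpleGraph (Fin 4) :=
  SimpleGraph.fromRel (fun x y =>
    (x = 0 ∧ y = 2) ∨ (x = 0 ∧ y = 3) ∨ (x = 2 ∧ y = 3) ∨ (x = 1 ∧ y = 3))

lemma comb {V : Type} [DecidableEq V] (G W : V → V → Prop)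
    [DecidableRel G] [DecidableRel W] (white : V → Prop) [DecidablePred white]
    (hGW : ∀ a b, G a b → ¬ W a b)
    (hGs : ∀ a b, G a b → G b a) (hWs : ∀ a b, W a b → W b a) :
    ∀ s : Finset V,
    (∀ a b, a ∈ s → b ∈ s → a ≠ b → G a b → white a) →
    (∀ a b c, a ∈ s → b ∈ s → c ∈ s → a ≠ b → c ≠ a → c ≠ b → G a b → W a c ∨ W b c) →
    (∑ x ∈ s, ∑ y ∈ s, if x ≠ y ∧ G x y then 1 else 0) ≤
      (∑ x ∈ s, if white x then 1 else 0) +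
      ∑ x ∈ s, ∑ y ∈ s, if x ≠ y ∧ W x y then (1:ℕ) else 0 := by
  intro s
  induction s using Finset.strongInductionOn with
  | _ s ih =>
    intro h1 h2
    by_cases hex : ∃ a ∈ s, ∃ b ∈ s, a ≠ b ∧ G a b
    · obtain ⟨a, ha, b, hb, hab, hG⟩ := hex
      set t : Finset V := (s.erase a).erase b with ht
      have hbt : b ∉ t := Finset.notMem_erase _ _
      have hat : a ∉ t := by rw [ht]; simp [Finset.mem_erase]
      have hba : b ∈ s.erase a := Finset.mem_erase.mpr ⟨hab.symm, hb⟩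
      have hts : t ⊆ s := (Finset.erase_subset _ _).trans (Finset.erase_subset _ _)
      have hrw : s = insert a (insert b t) := by
        rw [ht, Finset.insert_erase hba, Finset.insert_erase ha]
      have hanotin : a ∉ insert b t := by
        simp [hab, hat]
      -- expand double sums
      have expand : ∀ f : V → V → ℕ, (∀ x y, f x y = f y x) → (∀ x, f x x = 0) →
          (∑ x ∈ s, ∑ y ∈ s, f x y) =
            2 * f a b + 2 * (∑ y ∈ t, f a y) + 2 * (∑ y ∈ t, f b y)
              + ∑ x ∈ t, ∑ y ∈ t, f x y := by
        intro f hsym hdiag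
        have hx : ∀ x, (∑ y ∈ insert a (insert b t), f x y)
            = f x a + f x b + ∑ y ∈ t, f x y := by
          intro x
          rw [Finset.sum_insert hanotin, Finset.sum_insert hbt]
          ring
        rw [hrw, Finset.sum_insert hanotin, Finset.sum_insert hbt, hx a, hx b,
          Finset.sum_congr rfl (fun x _ => hx x),
          Finset.sum_add_distrib, Finset.sum_add_distrib]
        have e1 : ∑ x ∈ t, f x a = ∑ x ∈ t, f a x := Finset.sum_congr rfl (fun x _ => hsym x a)
        have e2 : ∑ x ∈ t, f x b = ∑ x ∈ t, f b x := Finset.sum_congr rfl (fun x _ => hsym x b)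
        rw [e1, e2, hdiag a, hdiag b, hsym b a]
        ring
      have gsym : ∀ x y, (if x ≠ y ∧ G x y then (1:ℕ) else 0) = (if y ≠ x ∧ G y x then 1 else 0) := by
        intro x y
        by_cases hxy : x = y
        · simp [hxy]
        · by_cases hg : G x y
          · simp [hxy, Ne.symm hxy, hg, hGs x y hg]
          · have : ¬ G y x := fun h' => hg (hGs y x h')
            simp [hg, this]
      have wsym : ∀ x y, (if x ≠ y ∧ W x y then (1:ℕ) else 0) = (if y ≠ x ∧ W y x then 1 else 0) := by
        intro x y
        by_cases hxy : x = y
        · simp [hxy]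
        · by_cases hg : W x y
          · simp [hxy, Ne.symm hxy, hg, hWs x y hg]
          · have : ¬ W y x := fun h' => hg (hWs y x h')
            simp [hg, this]
      have EG := expand (fun x y => if x ≠ y ∧ G x y then 1 else 0) gsym (by simp)
      have EW := expand (fun x y => if x ≠ y ∧ W x y then 1 else 0) wsym (by simp)
      have hWab : ¬ W a b := hGW a b hG
      have hwhitea : white a := h1 a b ha hb hab hG
      have hwhiteb : white b := h1 b a hb ha hab.symm (hGs a b hG)
      have EC : (∑ x ∈ s, if white x then (1:ℕ) else 0)
          = 2 + ∑ x ∈ t, if white x then 1 else 0 := by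
        rw [hrw, Finset.sum_insert hanotin, Finset.sum_insert hbt, if_pos hwhitea, if_pos hwhiteb]
        ring
      -- key pointwise bounds
      have key1 : (∑ y ∈ t, if a ≠ y ∧ G a y then (1:ℕ) else 0)
          + (∑ y ∈ t, if b ≠ y ∧ G b y then 1 else 0)
          ≤ ∑ y ∈ t, if white y then 1 else 0 := by
        rw [← Finset.sum_add_distrib]
        apply Finset.sum_le_sum
        intro y hy
        have hys : y ∈ s := hts hy
        have hya : y ≠ a := fun h => hat (h ▸ hy)
        have hyb : y ≠ b := fun h => hbt (h ▸ hy)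
        by_cases hga : G a y
        · by_cases hgb : G b y
          · exfalso
            rcases h2 a b y ha hb hys hab hya hyb hG with hw | hw
            · exact hGW a y hga hw
            · exact hGW b y hgb hw
          · have : white y := h1 y a hys ha hya (hGs a y hga)
            simp [hga, hgb, this, Ne.symm hya, Ne.symm hyb]
        · by_cases hgb : G b y
          · have : white y := h1 y b hys hb hyb (hGs b y hgb)
            simp [hga, hgb, this, Ne.symm hya, Ne.symm hyb]
          · simp [hga, hgb]
      have key2 : t.card ≤ (∑ y ∈ t, if a ≠ y ∧ W a y then (1:ℕ) else 0)
          + (∑ y ∈ t, if b ≠ y ∧ W b y then 1 else 0) := by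
        rw [← Finset.sum_add_distrib, Finset.card_eq_sum_ones]
        apply Finset.sum_le_sum
        intro y hy
        have hys : y ∈ s := hts hy
        have hya : y ≠ a := fun h => hat (h ▸ hy)
        have hyb : y ≠ b := fun h => hbt (h ▸ hy)
        rcases h2 a b y ha hb hys hab hya hyb hG with hw | hw
        · simp [Ne.symm hya, hw]
        · have : (if b ≠ y ∧ W b y then (1:ℕ) else 0) = 1 := by simp [Ne.symm hyb, hw]
          omega
      have key3 : (∑ y ∈ t, if white y then (1:ℕ) else 0) ≤ t.card := by
        rw [Finset.card_eq_sum_ones]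
        apply Finset.sum_le_sum
        intro y _
        split <;> omega
      have hsub : t ⊂ s := Finset.ssubset_iff_of_subset hts |>.mpr ⟨a, ha, hat⟩
      have IH := ih t hsub (fun x y hx hy => h1 x y (hts hx) (hts hy))
        (fun x y z hx hy hz => h2 x y z (hts hx) (hts hy) (hts hz))
      rw [EG, EW, EC, if_pos ⟨hab, hG⟩, if_neg (by tauto : ¬ (a ≠ b ∧ W a b))]
      omega
    · have : (∑ x ∈ s, ∑ y ∈ s, if x ≠ y ∧ G x y then (1:ℕ) else 0) = 0 := by
        apply Finset.sum_eq_zero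
        intro x hx
        apply Finset.sum_eq_zero
        intro y hy
        rw [if_neg]
        rintro ⟨hxy, hg⟩
        exact hex ⟨x, hx, y, hy, hxy, hg⟩
      omega

instance : DecidableRel pawGraph.Adj := fun a b =>
  decidable_of_iff _ (SimpleGraph.fromRel_adj _ a b).symm

lemma paw1 (K : CRG) (h : ¬ CHom pawGraph K) (i j : Fin K.n) (hij : i ≠ j)
    (hg : K.ecol i j = EColor.gray) : K.vcol i = false := by
  by_contra hb
  have hbi : K.vcol i = true := by revert hb; cases K.vcol i <;> simp
  have hgji : K.ecol j i = EColor.gray := (K.ecol_symm j i).symm ▸ hg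
  apply h
  refine ⟨fun k => if k.val = 1 then j else i, ?_, ?_⟩
  · intro u v huv
    fin_cases u <;> fin_cases v <;>
      try exact absurd huv (by decide)
    all_goals norm_num
    all_goals first
      | exact hbi
      | exact Or.inr ⟨hij.symm, by rw [hgji]; simp⟩
      | exact Or.inr ⟨hij, by rw [hg]; simp⟩
  · intro u v huv hnadj
    fin_cases u <;> fin_cases v <;>
      first
        | exact absurd rfl huv
        | exact absurd (by decide) hnadj
        | skip
    all_goals norm_num
    all_goals first
      | exact Or.inr ⟨hij, by rw [hg]; simp⟩
      | exact Or.inr ⟨hij.symm, by rw [hgji]; simp⟩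

lemma paw2 (K : CRG) (h : ¬ CHom pawGraph K) (a b c : Fin K.n)
    (hab : a ≠ b) (hca : c ≠ a) (hcb : c ≠ b)
    (hg : K.ecol a b = EColor.gray)
    (hac : K.ecol a c ≠ EColor.white) (hbc : K.ecol b c ≠ EColor.white) :
    False := by
  have hwa : K.vcol a = false := paw1 K h a b hab hg
  have hgba : K.ecol b a = EColor.gray := (K.ecol_symm a b) ▸ hg
  have hca' : K.ecol c a ≠ EColor.white := fun hx => hac ((K.ecol_symm a c).trans hx)
  have hcb' : K.ecol c b ≠ EColor.white := fun hx => hbc ((K.ecol_symm b c).trans hx)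
  apply h
  refine ⟨fun k => if k.val = 2 then b else if k.val = 3 then c else a, ?_, ?_⟩
  · intro u v huv
    fin_cases u <;> fin_cases v <;>
      try exact absurd huv (by decide)
    all_goals norm_num
    all_goals first
      | exact Or.inr ⟨hab, by rw [hg]; simp⟩
      | exact Or.inr ⟨hab.symm, by rw [hgba]; simp⟩
      | exact Or.inr ⟨hca.symm, hac⟩
      | exact Or.inr ⟨hca, hca'⟩
      | exact Or.inr ⟨hcb.symm, hbc⟩
      | exact Or.inr ⟨hcb, hcb'⟩
  · intro u v huv hnadj
    fin_cases u <;> fin_cases v <;>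
      first
        | exact absurd rfl huv
        | exact absurd (by decide) hnadj
        | skip
    all_goals norm_num
    all_goals first
      | exact hwa
      | exact Or.inl ⟨rfl, hwa⟩
      | exact Or.inr ⟨hab, by rw [hg]; simp⟩
      | exact Or.inr ⟨hab.symm, by rw [hgba]; simp⟩

theorem fK_lower_bound_paw (K : CRG) (h : ¬ CHom pawGraph K) :
    (1 : ℝ) / 3 ≤ K.fK (2 / 3) := by
  classical
  set n := K.n with hn
  -- named counts
  set wv : ℕ := (Finset.univ.filter (fun i : Fin K.n => K.vcol i = false)).card with hwv
  set bv : ℕ := (Finset.univ.filter (fun i : Fin K.n => K.vcol i = true)).card with hbv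
  set wp : ℕ := (Finset.univ.filter (fun ij : Fin K.n × Fin K.n =>
      ij.1 ≠ ij.2 ∧ K.ecol ij.1 ij.2 = EColor.white)).card with hwp
  set bp : ℕ := (Finset.univ.filter (fun ij : Fin K.n × Fin K.n =>
      ij.1 ≠ ij.2 ∧ K.ecol ij.1 ij.2 = EColor.black)).card with hbp
  set gp : ℕ := (Finset.univ.filter (fun ij : Fin K.n × Fin K.n =>
      ij.1 ≠ ij.2 ∧ K.ecol ij.1 ij.2 = EColor.gray)).card with hgp
  -- sum forms
  have pairsum : ∀ e : EColor,
      (Finset.univ.filter (fun ij : Fin K.n × Fin K.n =>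
        ij.1 ≠ ij.2 ∧ K.ecol ij.1 ij.2 = e)).card
      = ∑ x : Fin K.n, ∑ y : Fin K.n, if x ≠ y ∧ K.ecol x y = e then 1 else 0 := by
    intro e
    rw [Finset.card_filter, Fintype.sum_prod_type]
  have vsum : ∀ b : Bool,
      (Finset.univ.filter (fun i : Fin K.n => K.vcol i = b)).card
      = ∑ x : Fin K.n, if K.vcol x = b then 1 else 0 := by
    intro b; rw [Finset.card_filter]
  -- main combinatorial inequality
  have key : gp ≤ wv + wp := by
    rw [hgp, hwv, hwp, pairsum, pairsum, vsum]
    refine comb (fun i j => K.ecol i j = EColor.gray) (fun i j => K.ecol i j = EColor.white)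
      (fun i => K.vcol i = false) ?_ ?_ ?_ Finset.univ ?_ ?_
    · intro a b hg hw; rw [hg] at hw; exact EColor.noConfusion hw
    · intro a b hg; rw [← K.ecol_symm]; exact hg
    · intro a b hw; rw [← K.ecol_symm]; exact hw
    · intro a b _ _ hab hg; exact paw1 K h a b hab hg
    · intro a b c _ _ _ hab hca hcb hg
      by_contra hcon
      push_neg at hcon
      exact paw2 K h a b c hab hca hcb hg hcon.1 hcon.2
  -- partition identities
  have hv : wv + bv = n := by
    rw [hwv, hbv, vsum, vsum, ← Finset.sum_add_distrib]
    have : ∀ x : Fin K.n, ((if K.vcol x = false then 1 else 0)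
        + if K.vcol x = true then (1:ℕ) else 0) = 1 := by
      intro x; cases hx : K.vcol x <;> simp
    rw [Finset.sum_congr rfl (fun x _ => this x), Finset.sum_const, Finset.card_univ,
      Fintype.card_fin, smul_eq_mul, mul_one]
  have hp : wp + gp + bp + n = n * n := by
    rw [hwp, hgp, hbp, pairsum, pairsum, pairsum]
    have hdiag : (∑ x : Fin K.n, ∑ y : Fin K.n, if x = y then (1:ℕ) else 0) = n := by
      have : ∀ x : Fin K.n, (∑ y : Fin K.n, if x = y then (1:ℕ) else 0) = 1 := by
        intro x
        rw [Finset.sum_ite_eq]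
        simp
      rw [Finset.sum_congr rfl (fun x _ => this x), Finset.sum_const, Finset.card_univ,
        Fintype.card_fin, smul_eq_mul, mul_one]
    have htot : (∑ x : Fin K.n, ∑ y : Fin K.n, (1:ℕ)) = n * n := by
      simp [Finset.sum_const, Finset.card_univ, mul_comm, hn]
    calc (∑ x : Fin K.n, ∑ y : Fin K.n, if x ≠ y ∧ K.ecol x y = EColor.white then 1 else 0)
          + (∑ x : Fin K.n, ∑ y : Fin K.n, if x ≠ y ∧ K.ecol x y = EColor.gray then 1 else 0)
          + (∑ x : Fin K.n, ∑ y : Fin K.n, if x ≠ y ∧ K.ecol x y = EColor.black then 1 else 0)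
          + n
        = ∑ x : Fin K.n, ∑ y : Fin K.n,
            ((if x ≠ y ∧ K.ecol x y = EColor.white then 1 else 0)
              + (if x ≠ y ∧ K.ecol x y = EColor.gray then 1 else 0)
              + (if x ≠ y ∧ K.ecol x y = EColor.black then 1 else 0)
              + (if x = y then 1 else 0)) := by
          rw [← hdiag]
          simp [Finset.sum_add_distrib]
      _ = ∑ x : Fin K.n, ∑ y : Fin K.n, (1:ℕ) := by
          apply Finset.sum_congr rfl; intro x _
          apply Finset.sum_congr rfl; intro y _
          by_cases hxy : x = y
          · simp [hxy]
          · cases he : K.ecol x y <;> simp [hxy, he]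
      _ = n * n := htot
  have hnat : n * n ≤ 2 * (wv + wp) + (bv + bp) := by omega
  -- real arithmetic
  have hnpos : (0:ℝ) < (n : ℝ) ^ 2 := by
    have := K.npos
    positivity
  rw [CRG.fK]
  rw [← hwv, ← hbv, ← hwp, ← hbp]
  have hcast : ((n:ℝ)) ^ 2 ≤ 2 * ((wv:ℝ) + wp) + ((bv:ℝ) + bp) := by
    have : ((n * n : ℕ) : ℝ) ≤ ((2 * (wv + wp) + (bv + bp) : ℕ) : ℝ) := by
      exact_mod_cast hnat
    push_cast at this
    nlinarith [this]
  have hne : ((n:ℝ)) ≠ 0 := by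
    have := K.npos; positivity
  have h3 : (1:ℝ)/3 * ((n:ℝ)^2) ≤ 2/3 * ((wv:ℝ) + (wp:ℝ)) + (1 - 2/3) * ((bv:ℝ) + (bp:ℝ)) := by
    nlinarith [hcast]
  calc (1:ℝ)/3 = (1/(n:ℝ)^2) * ((1/3) * (n:ℝ)^2) := by field_simp
    _ ≤ (1/(n:ℝ)^2) * (2/3 * ((wv:ℝ) + (wp:ℝ)) + (1 - 2/3) * ((bv:ℝ) + (bp:ℝ))) := by
        apply mul_le_mul_of_nonneg_left _ (by positivity)
        linarith [h3]
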